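/- Let H be a real Hilbert space, let L : H → H be a continuous self-adjoint linear operator with ⟨Lx, x⟩ ≤ 0 for all x ∈ H, and let u : ℝ → H be differentiable with u'(t) = L(u(t)) for all t. Let t₀ ∈ ℝ, T > 0 and λ > 0. Then t ↦ ‖u(t)‖ is nonincreasing, and if sup{‖u(t)‖² : t ∈ [t₀ + T/2, t₀ + T]} ≤ e^{-Tλ/2} · sup{‖u(t)‖² : t ∈ [t₀, t₀ + T/2]}, then sup{‖u(t)‖² : t ∈ [t₀, t₀ + T/2]} ≤ e^{-Tλ/2} · sup{‖u(t)‖² : t ∈ [t₀ - T/2, t₀]}. -/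

import Mathlib

open scoped RealInnerProductSpace

/-- Lemma 4.8 for the linear equation `u' = L u` with `L` continuous, self-adjoint and
negative semi-definite on a real Hilbert space: `t ↦ ‖u t‖` is nonincreasing, and
exponential decay of the sup of `‖u‖²` at a later time interval implies exponential
decay at an earlier interval. -/
theorem stmt_6 {H : Type*} [NormedAddCommGroup H] [InnerProductSpace ℝ H] [CompleteSpace H]
    (L : H →L[ℝ] H) (hL : ∀ x y : H, ⟪L x, y⟫ = ⟪x, L y⟫)
    (hneg : ∀ x : H, ⟪L x, x⟫ ≤ 0)
    (u : ℝ → H) (hu : ∀ t : ℝ, HasDerivAt u (L (u t)) t)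
    (t₀ T lam : ℝ) (hT : 0 < T) (hlam : 0 < lam) :
    Antitone (fun t => ‖u t‖) ∧
    (sSup ((fun t => ‖u t‖ ^ 2) '' Set.Icc (t₀ + T / 2) (t₀ + T)) ≤
        Real.exp (-T * lam / 2) *
          sSup ((fun t => ‖u t‖ ^ 2) '' Set.Icc t₀ (t₀ + T / 2)) →
      sSup ((fun t => ‖u t‖ ^ 2) '' Set.Icc t₀ (t₀ + T / 2)) ≤
        Real.exp (-T * lam / 2) *
          sSup ((fun t => ‖u t‖ ^ 2) '' Set.Icc (t₀ - T / 2) t₀)) := by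
  set f : ℝ → ℝ := fun t => ‖u t‖ ^ 2 with hfdef
  have hfd : ∀ t, HasDerivAt f (2 * ⟪L (u t), u t⟫) t := by
    intro t
    have h := (hu t).inner (𝕜 := ℝ) (hu t)
    have heq : (fun t => ⟪u t, u t⟫) = f := by
      funext s; simp [hfdef, real_inner_self_eq_norm_sq]
    rw [heq] at h
    refine HasDerivAt.congr_deriv h ?_
    rw [real_inner_comm (u t) (L (u t))]; ring
  have hAnti : Antitone f := by
    apply antitone_of_deriv_nonpos (fun t => (hfd t).differentiableAt)
    intro t
    rw [(hfd t).deriv]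
    have := hneg (u t)
    linarith
  have hAntiN : Antitone fun t => ‖u t‖ := by
    intro a b hab
    have h2 : f b ≤ f a := hAnti hab
    have := norm_nonneg (u a)
    have := norm_nonneg (u b)
    simp only [hfdef] at h2
    nlinarith [h2]
  refine ⟨hAntiN, ?_⟩
  intro hyp
  have key : ∀ a b : ℝ, a ≤ b → sSup (f '' Set.Icc a b) = f a := by
    intro a b hab
    apply IsGreatest.csSup_eq
    refine ⟨⟨a, ⟨le_refl a, hab⟩, rfl⟩, ?_⟩
    rintro y ⟨x, ⟨hx1, _⟩, rfl⟩
    exact hAnti hx1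
  have hT2 : (0:ℝ) ≤ T / 2 := by linarith
  have e1 : sSup (f '' Set.Icc (t₀ + T / 2) (t₀ + T)) = f (t₀ + T / 2) :=
    key _ _ (by linarith)
  have e2 : sSup (f '' Set.Icc t₀ (t₀ + T / 2)) = f t₀ := key _ _ (by linarith)
  have e3 : sSup (f '' Set.Icc (t₀ - T / 2) t₀) = f (t₀ - T / 2) :=
    key _ _ (by linarith)
  rw [e2, e3]
  rw [e1, e2] at hyp
  -- constancy of s ↦ ⟪u (t₀ - T/2 + s), u (t₀ + T/2 - s)⟫
  have hconst : ⟪u (t₀ - T / 2), u (t₀ + T / 2)⟫ = f t₀ := by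
    set g : ℝ → ℝ := fun s => ⟪u (t₀ - T / 2 + s), u (t₀ + T / 2 - s)⟫ with hgdef
    have hg : ∀ s : ℝ, HasDerivAt g 0 s := by
      intro s
      have h1 : HasDerivAt (fun s : ℝ => u (t₀ - T / 2 + s))
          ((1 : ℝ) • L (u (t₀ - T / 2 + s))) s :=
        (hu (t₀ - T / 2 + s)).scomp s ((hasDerivAt_id s).const_add (t₀ - T / 2))
      have h2 : HasDerivAt (fun s : ℝ => u (t₀ + T / 2 - s))
          ((-1 : ℝ) • L (u (t₀ + T / 2 - s))) s := by
        have := (hu (t₀ + T / 2 - s)).scomp s ((hasDerivAt_id s).const_sub (t₀ + T / 2))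
        simpa [Function.comp_def] using this
      have h := h1.inner (𝕜 := ℝ) h2
      refine HasDerivAt.congr_deriv h ?_
      rw [inner_smul_right, inner_smul_left, hL]
      simp
    have hc := is_const_of_deriv_eq_zero (fun s => (hg s).differentiableAt)
      (fun s => (hg s).deriv) 0 (T / 2)
    have hg0 : g 0 = ⟪u (t₀ - T / 2), u (t₀ + T / 2)⟫ := by
      simp [hgdef]
    have hgT : g (T / 2) = f t₀ := by
      have ha : t₀ - T / 2 + T / 2 = t₀ := by ring
      have hb : t₀ + T / 2 - T / 2 = t₀ := by ring
      simp only [hgdef, ha, hb]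
      simp [hfdef, real_inner_self_eq_norm_sq]
    rw [hg0, hgT] at hc
    exact hc
  -- final algebra
  set E := Real.exp (-T * lam / 2) with hEdef
  have hE : 0 < E := Real.exp_pos _
  have hB : 0 ≤ f t₀ := by positivity
  have hA : 0 ≤ f (t₀ - T / 2) := by positivity
  have hCS : f t₀ ≤ ‖u (t₀ - T / 2)‖ * ‖u (t₀ + T / 2)‖ := by
    rw [← hconst]; exact real_inner_le_norm _ _
  have hsq : f t₀ ^ 2 ≤ f (t₀ - T / 2) * f (t₀ + T / 2) := by
    have h1 := norm_nonneg (u (t₀ - T / 2))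
    have h2 := norm_nonneg (u (t₀ + T / 2))
    have : f t₀ ^ 2 ≤ (‖u (t₀ - T / 2)‖ * ‖u (t₀ + T / 2)‖) ^ 2 := by
      nlinarith
    calc f t₀ ^ 2 ≤ (‖u (t₀ - T / 2)‖ * ‖u (t₀ + T / 2)‖) ^ 2 := this
      _ = f (t₀ - T / 2) * f (t₀ + T / 2) := by simp [hfdef]; ring
  rcases eq_or_lt_of_le hB with h0 | h0
  · rw [← h0]; positivity
  · nlinarith [hsq, hyp, mul_pos hE h0]
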